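/- arXiv:math/0409145 — 4 statements merged into one kernel-verified Lean document; each statement's English description precedes it below -/
import Mathlib

section
/- Let k be a field of characteristic p > 0 and S an r×r matrix over k[[t]] with nonzero determinant. Then there exist an invertible matrix M over k[[t]] and an invertible matrix N over k[[t^p]] (i.e., with all entries p-th powers) such that MSN is upper triangular with diagonal entries t^{e_1},...,t^{e_r}, each entry above the diagonal in column j is a polynomial of degree less than e_j, and for each i<j the (i,j)-entry has no monomial whose exponent is congruent to e_i modulo p. -/
open PowerSeries

namespace Stmt1Aux

variable {k : Type*} [Field k] {r : ℕ}

/-- shift a power series down by `d`. -/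
noncomputable def sdiv (d : ℕ) (f : PowerSeries k) : PowerSeries k :=
  PowerSeries.mk fun m => PowerSeries.coeff (m + d) f

lemma coeff_X_pow_mul_sdiv (d m : ℕ) (f : PowerSeries k) :
    PowerSeries.coeff m (X ^ d * sdiv d f) =
      if d ≤ m then PowerSeries.coeff m f else 0 := by
  rw [PowerSeries.coeff_X_pow_mul']
  split_ifs with h
  · rw [sdiv, PowerSeries.coeff_mk, Nat.sub_add_cancel h]
  · rfl

lemma coeff_sdiv_mul_X_pow (d m : ℕ) (f : PowerSeries k) :
    PowerSeries.coeff m (sdiv d f * X ^ d) =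
      if d ≤ m then PowerSeries.coeff m f else 0 := by
  rw [mul_comm]; exact coeff_X_pow_mul_sdiv d m f

lemma X_pow_mul_sdiv_eq (d : ℕ) (f : PowerSeries k)
    (h : ∀ m < d, PowerSeries.coeff m f = 0) : X ^ d * sdiv d f = f := by
  ext m
  rw [coeff_X_pow_mul_sdiv]
  split_ifs with hd
  · rfl
  · exact (h m (not_le.mp hd)).symm

/-- power series in `t^p`. -/
def USeries (p : ℕ) (f : PowerSeries k) : Prop :=
  ∀ m : ℕ, ¬ p ∣ m → PowerSeries.coeff m f = 0

lemma USeries.mul {p : ℕ} {f g : PowerSeries k} (hf : USeries p f) (hg : USeries p g) :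
    USeries p (f * g) := by
  intro m hm
  rw [PowerSeries.coeff_mul]
  apply Finset.sum_eq_zero
  rintro ⟨u, v⟩ huv
  rw [Finset.HasAntidiagonal.mem_antidiagonal] at huv
  by_cases hu : p ∣ u
  · have hv : ¬ p ∣ v := fun hv => hm (huv ▸ dvd_add hu hv)
    simp [hg v hv]
  · simp [hf u hu]

lemma USeries.add {p : ℕ} {f g : PowerSeries k} (hf : USeries p f) (hg : USeries p g) :
    USeries p (f + g) := by
  intro m hm; simp [hf m hm, hg m hm]

lemma uSeries_zero (p : ℕ) : USeries p (0 : PowerSeries k) := by intro m _; simp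

lemma uSeries_one (p : ℕ) : USeries p (1 : PowerSeries k) := by
  intro m hm
  rw [PowerSeries.coeff_one, if_neg]
  rintro rfl
  exact hm (dvd_zero p)

def UMat (p : ℕ) (N : Matrix (Fin r) (Fin r) (PowerSeries k)) : Prop :=
  ∀ i j : Fin r, USeries p (N i j)

lemma UMat.mul {p : ℕ} {N N' : Matrix (Fin r) (Fin r) (PowerSeries k)}
    (hN : UMat p N) (hN' : UMat p N') : UMat p (N * N') := by
  intro i j m hm
  rw [Matrix.mul_apply, map_sum]
  exact Finset.sum_eq_zero fun c _ => (hN i c).mul (hN' c j) m hm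

lemma uMat_one (p : ℕ) : UMat p (1 : Matrix (Fin r) (Fin r) (PowerSeries k)) := by
  intro i j
  by_cases h : i = j
  · subst h; simpa using uSeries_one p
  · rw [Matrix.one_apply_ne h]; exact uSeries_zero p

/-! ### Elementary operation matrices -/

/-- Row operation: add `w a` times row `i` to each row `a`. -/
noncomputable def rowOp (i : Fin r) (w : Fin r → PowerSeries k) :
    Matrix (Fin r) (Fin r) (PowerSeries k) :=
  1 + Matrix.of (fun a b => if b = i then w a else 0)

lemma rowOp_mul (i : Fin r) (w : Fin r → PowerSeries k)
    (A : Matrix (Fin r) (Fin r) (PowerSeries k)) (a b : Fin r) :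
    (rowOp i w * A) a b = A a b + w a * A i b := by
  rw [rowOp, Matrix.add_mul, Matrix.add_apply, Matrix.one_mul]
  congr 1
  rw [Matrix.mul_apply]
  rw [Finset.sum_eq_single i]
  · simp
  · intro c _ hc; simp [Matrix.of_apply, hc]
  · intro h; exact absurd (Finset.mem_univ i) h

lemma isUnit_rowOp (i : Fin r) (w : Fin r → PowerSeries k) (hw : w i = 0) :
    IsUnit (rowOp i w) := by
  set E : Matrix (Fin r) (Fin r) (PowerSeries k) :=
    Matrix.of (fun a b => if b = i then w a else 0) with hE
  have hE2 : E * E = 0 := by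
    refine Matrix.ext fun a b => ?_
    rw [Matrix.mul_apply, Matrix.zero_apply]
    apply Finset.sum_eq_zero
    intro c _
    by_cases hc : c = i
    · subst hc; simp [hE, Matrix.of_apply, hw]
    · simp [hE, Matrix.of_apply, hc]
  have h1 : rowOp i w * (1 - E) = 1 := by
    rw [rowOp, add_mul, mul_sub, mul_sub, one_mul, one_mul, mul_one, hE2]
    abel
  exact @isUnit_of_invertible _ _ _ (invertibleOfRightInverse _ _ h1)

variable {k : Type*} [Field k] {r : ℕ}

/-- Column operation: add `h b` times column `l` to each column `b`. -/
noncomputable def colOp (l : Fin r) (h : Fin r → PowerSeries k) :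
    Matrix (Fin r) (Fin r) (PowerSeries k) :=
  1 + Matrix.of (fun a b => if a = l then h b else 0)

lemma mul_colOp (l : Fin r) (h : Fin r → PowerSeries k)
    (A : Matrix (Fin r) (Fin r) (PowerSeries k)) (a b : Fin r) :
    (A * colOp l h) a b = A a b + A a l * h b := by
  rw [colOp, Matrix.mul_add, Matrix.add_apply, Matrix.mul_one]
  congr 1
  rw [Matrix.mul_apply]
  rw [Finset.sum_eq_single l]
  · simp
  · intro c _ hc; simp [Matrix.of_apply, hc]
  · intro hl; exact absurd (Finset.mem_univ l) hl

lemma isUnit_colOp (l : Fin r) (h : Fin r → PowerSeries k) (hl : h l = 0) :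
    IsUnit (colOp l h) := by
  set E : Matrix (Fin r) (Fin r) (PowerSeries k) :=
    Matrix.of (fun a b => if a = l then h b else 0) with hE
  have hE2 : E * E = 0 := by
    refine Matrix.ext fun a b => ?_
    rw [Matrix.mul_apply, Matrix.zero_apply]
    apply Finset.sum_eq_zero
    intro c _
    by_cases hc : c = l
    · by_cases ha : a = l
      · simp [hE, Matrix.of_apply, ha, hc, hl]
      · simp [hE, Matrix.of_apply, ha, hc]
    · simp [hE, Matrix.of_apply, hc]
  have h1 : colOp l h * (1 - E) = 1 := by
    rw [colOp, add_mul, mul_sub, mul_sub, one_mul, one_mul, mul_one, hE2]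
    abel
  exact @isUnit_of_invertible _ _ _ (invertibleOfRightInverse _ _ h1)

lemma uMat_colOp (p : ℕ) (l : Fin r) (h : Fin r → PowerSeries k)
    (hu : ∀ b, USeries p (h b)) : UMat p (colOp l h) := by
  intro a b
  refine USeries.add (uMat_one p a b) ?_
  simp only [Matrix.of_apply]
  by_cases ha : a = l
  · simpa [ha] using hu b
  · simpa [ha] using uSeries_zero p

/-- Left-permutation matrix: `(permL k σ * A) a b = A (σ a) b`. -/
noncomputable def permL (k : Type*) [Field k] {r : ℕ} (σ : Equiv.Perm (Fin r)) : Matrix (Fin r) (Fin r) (PowerSeries k) :=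
  Matrix.of fun a b => (1 : Matrix (Fin r) (Fin r) (PowerSeries k)) (σ a) b

lemma permL_mul (σ : Equiv.Perm (Fin r)) (A : Matrix (Fin r) (Fin r) (PowerSeries k))
    (a b : Fin r) : (permL k σ * A) a b = A (σ a) b := by
  rw [Matrix.mul_apply]
  rw [Finset.sum_eq_single (σ a)]
  · simp [permL, Matrix.one_apply]
  · intro c _ hc; simp [permL, Matrix.one_apply, Ne.symm hc, hc]
  · intro hc; exact absurd (Finset.mem_univ _) hc

lemma isUnit_permL (σ : Equiv.Perm (Fin r)) :
    IsUnit (permL k σ) := by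
  have h1 : (permL k σ) * permL k σ⁻¹ = 1 := by
    refine Matrix.ext fun a b => ?_
    rw [permL_mul]
    simp [permL, Matrix.one_apply]
  exact @isUnit_of_invertible _ _ _ (invertibleOfRightInverse _ _ h1)

/-- Right-permutation matrix: `(A * permR k σ) a b = A a (σ b)`. -/
noncomputable def permR (k : Type*) [Field k] {r : ℕ} (σ : Equiv.Perm (Fin r)) : Matrix (Fin r) (Fin r) (PowerSeries k) :=
  Matrix.of fun a b => (1 : Matrix (Fin r) (Fin r) (PowerSeries k)) a (σ b)

lemma mul_permR (σ : Equiv.Perm (Fin r)) (A : Matrix (Fin r) (Fin r) (PowerSeries k))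
    (a b : Fin r) : (A * permR k σ) a b = A a (σ b) := by
  rw [Matrix.mul_apply]
  rw [Finset.sum_eq_single (σ b)]
  · simp [permR, Matrix.one_apply]
  · intro c _ hc; simp [permR, Matrix.one_apply, hc]
  · intro hc; exact absurd (Finset.mem_univ _) hc

lemma isUnit_permR (σ : Equiv.Perm (Fin r)) :
    IsUnit (permR k σ) := by
  have h1 : (permR k σ) * permR k σ⁻¹ = 1 := by
    refine Matrix.ext fun a b => ?_
    rw [mul_permR]
    simp [permR, Matrix.one_apply]
  exact @isUnit_of_invertible _ _ _ (invertibleOfRightInverse _ _ h1)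

lemma uMat_permR (p : ℕ) (σ : Equiv.Perm (Fin r)) :
    UMat p (permR k σ) := by
  intro a b
  simp only [permR, Matrix.of_apply, Matrix.one_apply]
  by_cases h : a = σ b
  · simpa [h] using uSeries_one p
  · simpa [h] using uSeries_zero p

lemma triangularize (k : Type*) [Field k] (r : ℕ) :
    ∀ (n l : ℕ), r ≤ l + n → ∀ S : Matrix (Fin r) (Fin r) (PowerSeries k), S.det ≠ 0 →
    ∀ e₀ : Fin r → ℕ,
    (∀ c : Fin r, (c : ℕ) < l →
        (∀ kk : Fin r, c < kk → S kk c = 0) ∧ S c c = X ^ e₀ c) →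
    ∃ (M : Matrix (Fin r) (Fin r) (PowerSeries k)) (e : Fin r → ℕ), IsUnit M ∧
      (∀ i j : Fin r, j < i → (M * S) i j = 0) ∧
      (∀ i : Fin r, (M * S) i i = X ^ e i) ∧
      (∀ c : Fin r, (c : ℕ) < l → e c = e₀ c) ∧
      (∀ (hl : l < r) (kk : Fin r) (m : ℕ), l ≤ (kk : ℕ) →
          PowerSeries.coeff m (S kk ⟨l, hl⟩) ≠ 0 → e ⟨l, hl⟩ ≤ m) := by
  intro n
  induction n with
  | zero =>
    intro l hrl S hdet e₀ hgood
    refine ⟨1, e₀, isUnit_one, ?_, ?_, fun c _ => rfl, fun hl => absurd hl (by omega)⟩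
    · intro i j hji
      rw [Matrix.one_mul]
      exact (hgood j (by omega)).1 i hji
    · intro i
      rw [Matrix.one_mul]
      exact (hgood i (by omega)).2
  | succ n IH =>
    intro l hrl S hdet e₀ hgood
    by_cases hlr : l < r
    swap
    · exact IH l (by omega) S hdet e₀ hgood
    classical
    set cl : Fin r := ⟨l, hlr⟩ with hcl
    have hclv : (cl : ℕ) = l := rfl
    -- pivot existence
    have hex : ∃ m : ℕ, ∃ kk : Fin r, l ≤ (kk : ℕ) ∧ PowerSeries.coeff m (S kk cl) ≠ 0 := by
      by_contra hcon
      push_neg at hcon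
      have hz : ∀ kk : Fin r, l ≤ (kk : ℕ) → S kk cl = 0 := by
        intro kk hkk
        ext m
        simpa using hcon m kk hkk
      apply hdet
      rw [Matrix.det_apply]
      apply Finset.sum_eq_zero
      intro σ _
      have hexc : ∃ c : Fin r, (c : ℕ) ≤ l ∧ l ≤ ((σ c : Fin r) : ℕ) := by
        by_contra hc2
        push_neg at hc2
        have hall : ∀ x : Fin (l+1), ((σ (Fin.castLE (by omega : l+1 ≤ r) x) : Fin r) : ℕ) < l := by
          intro x
          apply hc2
          simp only [Fin.coe_castLE]
          have := x.isLt
          omega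
        have hinj : Function.Injective (fun x : Fin (l+1) => (⟨_, hall x⟩ : Fin l)) := by
          intro x y hxy
          have h3 : ((σ (Fin.castLE (by omega : l+1 ≤ r) x) : Fin r) : ℕ)
              = ((σ (Fin.castLE (by omega) y) : Fin r) : ℕ) := by
            simpa using congrArg Fin.val hxy
          have h2 := σ.injective (Fin.ext h3)
          have h4 := congrArg Fin.val h2
          simp only [Fin.coe_castLE] at h4
          exact Fin.ext h4
        have hcard := Fintype.card_le_of_injective _ hinj
        simp only [Fintype.card_fin] at hcard
        omega
      obtain ⟨c, hcle, hscl⟩ := hexc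
      rcases lt_or_eq_of_le hcle with h | h
      · have hzero : S (σ c) c = 0 := (hgood c h).1 (σ c) (by rw [Fin.lt_def]; omega)
        have hp0 : (∏ i : Fin r, S (σ i) i) = 0 :=
          Finset.prod_eq_zero (Finset.mem_univ c) hzero
        rw [hp0, smul_zero]
      · have hzero : S (σ c) c = 0 := by
          have hceq : c = cl := Fin.ext h
          rw [hceq] at hscl ⊢
          exact hz (σ cl) hscl
        have hp0 : (∏ i : Fin r, S (σ i) i) = 0 :=
          Finset.prod_eq_zero (Finset.mem_univ c) hzero
        rw [hp0, smul_zero]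
    have hP : ∃ m : ℕ, ∃ kk : Fin r, l ≤ (kk : ℕ) ∧ PowerSeries.coeff m (S kk cl) ≠ 0 := hex
    set v := Nat.find hP with hv
    obtain ⟨kk₀, hkk₀, hfv⟩ := Nat.find_spec hP
    have hmin : ∀ m < v, ∀ kk : Fin r, l ≤ (kk : ℕ) → PowerSeries.coeff m (S kk cl) = 0 := by
      intro m hm kk hkk
      by_contra hne
      exact Nat.find_min hP hm ⟨kk, hkk, hne⟩
    set σ := Equiv.swap cl kk₀ with hσ
    have hσcl : σ cl = kk₀ := Equiv.swap_apply_left _ _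
    have hσval : ∀ a : Fin r, σ a = a ∨ l ≤ ((σ a : Fin r) : ℕ) := by
      intro a
      rcases eq_or_ne a cl with h | h
      · right; rw [h, hσcl]; exact hkk₀
      rcases eq_or_ne a kk₀ with h2 | h2
      · right; rw [h2, hσ, Equiv.swap_apply_right]
      · left; exact Equiv.swap_apply_of_ne_of_ne h h2
    have hσge : ∀ a : Fin r, l ≤ (a : ℕ) → l ≤ ((σ a : Fin r) : ℕ) := by
      intro a ha
      rcases hσval a with h | h
      · rw [h]; exact ha
      · exact h
    have hσfix : ∀ c : Fin r, (c : ℕ) < l → σ c = c := by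
      intro c hc
      refine Equiv.swap_apply_of_ne_of_ne ?_ ?_
      · intro h; rw [h] at hc; omega
      · intro h; rw [h] at hc; omega
    set f := S kk₀ cl with hf
    have hflow : ∀ m < v, PowerSeries.coeff m f = 0 := fun m hm => hmin m hm kk₀ hkk₀
    have hgunit : IsUnit (sdiv v f) := by
      rw [PowerSeries.isUnit_iff_constantCoeff]
      have hcc : PowerSeries.constantCoeff (sdiv v f) = PowerSeries.coeff v f := by
        have := PowerSeries.coeff_zero_eq_constantCoeff (R := k)
        rw [← this]
        rw [sdiv, PowerSeries.coeff_mk, zero_add]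
      rw [hcc]
      exact isUnit_iff_ne_zero.mpr hfv
    obtain ⟨u, hu⟩ := hgunit
    have hfu : f = X ^ v * (u : PowerSeries k) := by
      rw [hu]; exact (X_pow_mul_sdiv_eq v f hflow).symm
    set d : Fin r → PowerSeries k :=
      Function.update (fun _ => (1 : PowerSeries k)) cl ((u⁻¹ : (PowerSeries k)ˣ) : PowerSeries k)
      with hd
    set S2 := Matrix.diagonal d * (permL k σ * S) with hS2def
    have hS2e : ∀ a b, S2 a b = d a * S (σ a) b := by
      intro a b; rw [hS2def, Matrix.diagonal_mul, permL_mul]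
    have hd1 : ∀ a : Fin r, a ≠ cl → d a = 1 := by
      intro a ha; rw [hd, Function.update_of_ne ha]
    have hdcl : d cl = ((u⁻¹ : (PowerSeries k)ˣ) : PowerSeries k) := by
      rw [hd, Function.update_self]
    have hS2cl : S2 cl cl = X ^ v := by
      rw [hS2e, hσcl, ← hf, hfu, hdcl]
      have : ((u⁻¹ : (PowerSeries k)ˣ) : PowerSeries k) * (X ^ v * (u : PowerSeries k))
          = (((u⁻¹ : (PowerSeries k)ˣ) : PowerSeries k) * ((u : (PowerSeries k)ˣ) : PowerSeries k))
            * X ^ v := by ring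
      rw [this, Units.inv_mul, one_mul]
    set w : Fin r → PowerSeries k := fun a => if l < (a : ℕ) then -(sdiv v (S2 a cl)) else 0 with hw
    have hwcl : w cl = 0 := by rw [hw]; simp [hclv]
    set S3 := rowOp cl w * S2 with hS3def
    have hS3e : ∀ a b, S3 a b = S2 a b + w a * S2 cl b := fun a b => rowOp_mul cl w S2 a b
    have hS2lowzero : ∀ a : Fin r, l ≤ (a : ℕ) → ∀ m < v, PowerSeries.coeff m (S2 a cl) = 0 := by
      intro a ha m hm
      rcases eq_or_ne a cl with hacl | hacl
      · rw [hacl, hS2cl, PowerSeries.coeff_X_pow, if_neg (by omega)]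
      · rw [hS2e, hd1 a hacl, one_mul]
        exact hmin m hm (σ a) (hσge a ha)
    have hS3colcl : ∀ a : Fin r, l < (a : ℕ) → S3 a cl = 0 := by
      intro a ha
      have hX : sdiv v (S2 a cl) * X ^ v = S2 a cl := by
        rw [mul_comm]
        exact X_pow_mul_sdiv_eq v (S2 a cl) (hS2lowzero a (le_of_lt ha))
      rw [hS3e, hS2cl, hw]
      simp only [if_pos ha]
      rw [neg_mul, hX]
      exact add_neg_cancel _
    set e₀' := Function.update e₀ cl v with he₀'
    have hgood' : ∀ c : Fin r, (c : ℕ) < l + 1 →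
        (∀ kk : Fin r, c < kk → S3 kk c = 0) ∧ S3 c c = X ^ e₀' c := by
      intro c hc
      rcases Nat.lt_or_ge (c : ℕ) l with hcl2 | hcl2
      · have hccl : c ≠ cl := by intro h; rw [h] at hcl2; omega
        have hSzero : ∀ kk : Fin r, (c : ℕ) < (kk : ℕ) → S kk c = 0 := by
          intro kk hkk
          exact (hgood c hcl2).1 kk (by rw [Fin.lt_def]; omega)
        have h2 : S2 cl c = 0 := by
          rw [hS2e, hσcl, hSzero kk₀ (by omega), mul_zero]
        constructor
        · intro kk hkk
          have h1 : S2 kk c = 0 := by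
            rw [hS2e]
            rw [hSzero (σ kk) ?_, mul_zero]
            rcases hσval kk with h | h
            · rw [h]; rw [Fin.lt_def] at hkk; omega
            · omega
          rw [hS3e, h1, h2, mul_zero, add_zero]
        · have hfix : σ c = c := hσfix c hcl2
          rw [hS3e, h2, mul_zero, add_zero, hS2e, hfix, hd1 c hccl, one_mul,
            (hgood c hcl2).2, he₀', Function.update_of_ne hccl]
      · have hceq : c = cl := Fin.ext (by omega)
        subst hceq
        constructor
        · intro kk hkk
          rw [Fin.lt_def] at hkk
          exact hS3colcl kk (by omega)
        · rw [hS3e, hwcl, zero_mul, add_zero, hS2cl, he₀', Function.update_self]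
    have hunit1 : IsUnit (rowOp cl w) := isUnit_rowOp cl w hwcl
    have hunit2 : IsUnit (Matrix.diagonal d) := by
      set dinv : Fin r → PowerSeries k :=
        Function.update (fun _ => (1 : PowerSeries k)) cl ((u : (PowerSeries k)ˣ) : PowerSeries k)
        with hdinv
      have h1 : Matrix.diagonal d * Matrix.diagonal dinv = 1 := by
        rw [Matrix.diagonal_mul_diagonal]
        have hfun : (fun a => d a * dinv a) = fun _ => (1 : PowerSeries k) := by
          funext a
          by_cases ha : a = cl
          · rw [ha, hdcl, hdinv, Function.update_self]
            exact Units.inv_mul u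
          · rw [hd1 a ha, one_mul, hdinv, Function.update_of_ne ha]
        rw [hfun, Matrix.diagonal_one]
      exact @isUnit_of_invertible _ _ _ (invertibleOfRightInverse _ _ h1)
    have hunit3 : IsUnit (permL k σ) := isUnit_permL σ
    have hdet3 : S3.det ≠ 0 := by
      rw [hS3def, hS2def]
      simp only [Matrix.det_mul]
      exact mul_ne_zero ((Matrix.isUnit_iff_isUnit_det _).mp hunit1).ne_zero
        (mul_ne_zero ((Matrix.isUnit_iff_isUnit_det _).mp hunit2).ne_zero
          (mul_ne_zero ((Matrix.isUnit_iff_isUnit_det _).mp hunit3).ne_zero hdet))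
    obtain ⟨M₁, e, hM₁, htri, hdiag, hpre, _⟩ := IH (l + 1) (by omega) S3 hdet3 e₀' hgood'
    have hMS : M₁ * (rowOp cl w * (Matrix.diagonal d * permL k σ)) * S = M₁ * S3 := by
      rw [hS3def, hS2def]
      simp only [Matrix.mul_assoc]
    refine ⟨M₁ * (rowOp cl w * (Matrix.diagonal d * permL k σ)), e,
      hM₁.mul (hunit1.mul (hunit2.mul hunit3)), ?_, ?_, ?_, ?_⟩
    · intro i j hji; rw [hMS]; exact htri i j hji
    · intro i; rw [hMS]; exact hdiag i
    · intro c hc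
      have hccl : c ≠ cl := by intro h; rw [h] at hc; omega
      rw [hpre c (by omega), he₀', Function.update_of_ne hccl]
    · intro hl kk m hkk hc
      have hfin : (⟨l, hl⟩ : Fin r) = cl := rfl
      rw [hfin]
      have h1 : e cl = v := by
        rw [hpre cl (by omega), he₀', Function.update_self]
      rw [h1]
      exact Nat.find_min' hP ⟨kk, hkk, hc⟩

lemma reduce (k : Type*) [Field k] (r : ℕ) (e : Fin r → ℕ) :
    ∀ (n l : ℕ), r ≤ l + n → ∀ A : Matrix (Fin r) (Fin r) (PowerSeries k),
    (∀ i j : Fin r, j < i → A i j = 0) → (∀ i : Fin r, A i i = X ^ e i) →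
    (∀ i c : Fin r, i < c → (c : ℕ) < l → ∀ m : ℕ, e c ≤ m →
        PowerSeries.coeff m (A i c) = 0) →
    ∃ M : Matrix (Fin r) (Fin r) (PowerSeries k), IsUnit M ∧
      (∀ i j : Fin r, j < i → (M * A) i j = 0) ∧
      (∀ i : Fin r, (M * A) i i = X ^ e i) ∧
      (∀ i c : Fin r, i < c → ∀ m : ℕ, e c ≤ m → PowerSeries.coeff m ((M * A) i c) = 0) := by
  intro n
  induction n with
  | zero =>
    intro l hrl A htri hdiag hred
    refine ⟨1, isUnit_one, by simpa using htri, by simpa using hdiag, ?_⟩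
    intro i c hic m hm
    rw [Matrix.one_mul]
    exact hred i c hic (by omega) m hm
  | succ n IH =>
    intro l hrl A htri hdiag hred
    by_cases hlr : l < r
    swap
    · exact IH l (by omega) A htri hdiag hred
    set cl : Fin r := ⟨l, hlr⟩ with hcl
    have hclv : (cl : ℕ) = l := rfl
    set w : Fin r → PowerSeries k :=
      fun a => if a < cl then -(sdiv (e cl) (A a cl)) else 0 with hw
    have hwcl : w cl = 0 := by rw [hw]; simp
    set A' := rowOp cl w * A with hA'def
    have hA'e : ∀ a b, A' a b = A a b + w a * A cl b := fun a b => rowOp_mul cl w A a b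
    have htri' : ∀ i j : Fin r, j < i → A' i j = 0 := by
      intro i j hji
      rw [hA'e, htri i j hji]
      by_cases hi : i < cl
      · rw [htri cl j (lt_trans hji hi), mul_zero, add_zero]
      · rw [hw]; simp only [if_neg hi]; rw [zero_mul, add_zero]
    have hdiag' : ∀ i : Fin r, A' i i = X ^ e i := by
      intro i
      rw [hA'e]
      by_cases hi : i < cl
      · rw [htri cl i hi, mul_zero, add_zero, hdiag i]
      · rw [hw]; simp only [if_neg hi]; rw [zero_mul, add_zero, hdiag i]
    have hred' : ∀ i c : Fin r, i < c → (c : ℕ) < l + 1 → ∀ m : ℕ, e c ≤ m →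
        PowerSeries.coeff m (A' i c) = 0 := by
      intro i c hic hc m hm
      rcases Nat.lt_or_ge (c : ℕ) l with hc2 | hc2
      · have hz : A cl c = 0 := htri cl c (by rw [Fin.lt_def]; exact hc2)
        rw [hA'e, hz, mul_zero, add_zero]
        exact hred i c hic hc2 m hm
      · have hceq : c = cl := Fin.ext (by omega)
        subst hceq
        rw [hA'e, hdiag, hw]
        simp only [if_pos hic]
        rw [neg_mul, map_add, map_neg, coeff_sdiv_mul_X_pow, if_pos hm]
        exact add_neg_cancel _
    obtain ⟨M₁, hM₁, h1, h2, h3⟩ := IH (l + 1) (by omega) A' htri' hdiag' hred'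
    have hunit : IsUnit (rowOp cl w) := isUnit_rowOp cl w hwcl
    have hMA : M₁ * rowOp cl w * A = M₁ * A' := by rw [hA'def, Matrix.mul_assoc]
    exact ⟨M₁ * rowOp cl w, hM₁.mul hunit,
      fun i j hji => by rw [hMA]; exact h1 i j hji,
      fun i => by rw [hMA]; exact h2 i,
      fun i c hic m hm => by rw [hMA]; exact h3 i c hic m hm⟩

lemma clear (k : Type*) [Field k] (p r : ℕ) (e : Fin r → ℕ) :
    ∀ (l : ℕ), ∀ A : Matrix (Fin r) (Fin r) (PowerSeries k),
    (∀ i j : Fin r, j < i → A i j = 0) → (∀ i : Fin r, A i i = X ^ e i) →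
    (∀ i c : Fin r, i < c → ∀ m : ℕ, e c ≤ m → PowerSeries.coeff m (A i c) = 0) →
    (∀ a c : Fin r, a < c → l ≤ (a : ℕ) → ∀ m : ℕ, e a ≤ m → m % p = e a % p →
        PowerSeries.coeff m (A a c) = 0) →
    ∃ N : Matrix (Fin r) (Fin r) (PowerSeries k), IsUnit N ∧ UMat p N ∧
      (∀ i j : Fin r, j < i → (A * N) i j = 0) ∧
      (∀ i : Fin r, (A * N) i i = X ^ e i) ∧
      (∀ i c : Fin r, i < c → ∀ m : ℕ, e c ≤ m → PowerSeries.coeff m ((A * N) i c) = 0) ∧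
      (∀ a c : Fin r, a < c → ∀ m : ℕ, e a ≤ m → m % p = e a % p →
        PowerSeries.coeff m ((A * N) a c) = 0) := by
  intro l
  induction l with
  | zero =>
    intro A htri hdiag hred hcln
    refine ⟨1, isUnit_one, uMat_one p, by simpa using htri, by simpa using hdiag, ?_, ?_⟩
    · intro i c hic m hm; rw [Matrix.mul_one]; exact hred i c hic m hm
    · intro a c hac m h1 h2; rw [Matrix.mul_one]; exact hcln a c hac (Nat.zero_le _) m h1 h2
  | succ l IH =>
    intro A htri hdiag hred hcln
    by_cases hlr : l < r
    swap
    · apply IH A htri hdiag hred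
      intro a c hac hal m h1 h2
      exfalso
      have := a.isLt
      omega
    set al : Fin r := ⟨l, hlr⟩ with hal
    have halv : (al : ℕ) = l := rfl
    set phi : Fin r → PowerSeries k := fun b => PowerSeries.mk fun m =>
      if e al ≤ m ∧ m % p = e al % p then PowerSeries.coeff m (A al b) else 0 with hphi
    set h : Fin r → PowerSeries k :=
      fun b => if al < b then -(sdiv (e al) (phi b)) else 0 with hh
    have hhal : h al = 0 := by rw [hh]; simp
    have hphilow : ∀ b : Fin r, ∀ m < e al, PowerSeries.coeff m (phi b) = 0 := by
      intro b m hm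
      rw [hphi, PowerSeries.coeff_mk, if_neg]
      intro hcond
      omega
    have hXphi : ∀ b : Fin r, X ^ e al * sdiv (e al) (phi b) = phi b :=
      fun b => X_pow_mul_sdiv_eq (e al) (phi b) (hphilow b)
    have hcoeffh : ∀ (b : Fin r) (v1 : ℕ), al < b → PowerSeries.coeff v1 (h b) =
        -(if (v1 + e al) % p = e al % p
            then PowerSeries.coeff (v1 + e al) (A al b) else 0) := by
      intro b v1 hb
      rw [hh]
      simp only [if_pos hb]
      rw [map_neg, sdiv, PowerSeries.coeff_mk, hphi, PowerSeries.coeff_mk]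
      congr 1
      rcases Nat.decEq ((v1 + e al) % p) (e al % p) with hd | hd
      · rw [if_neg, if_neg hd]
        intro hcond
        exact hd hcond.2
      · rw [if_pos hd, if_pos ⟨Nat.le_add_left _ _, hd⟩]
    have hUh : ∀ b : Fin r, USeries p (h b) := by
      intro b v1 hv1
      by_cases hb : al < b
      · rw [hcoeffh b v1 hb, if_neg, neg_zero]
        intro hmod
        apply hv1
        have h5 : Nat.ModEq p (e al) (v1 + e al) := (Nat.ModEq.symm hmod)
        have h6 := (Nat.modEq_iff_dvd' (Nat.le_add_left (e al) v1)).mp h5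
        rwa [Nat.add_sub_cancel] at h6
      · rw [hh]; simp only [if_neg hb]; exact map_zero _
    set A' := A * colOp al h with hA'def
    have hA'e : ∀ a b, A' a b = A a b + A a al * h b := fun a b => mul_colOp al h A a b
    have htri' : ∀ i j : Fin r, j < i → A' i j = 0 := by
      intro i j hji
      rw [hA'e, htri i j hji]
      by_cases hj : al < j
      · rw [htri i al (lt_trans hj hji), zero_mul, add_zero]
      · rw [hh]; simp only [if_neg hj]; rw [mul_zero, add_zero]
    have hdiag' : ∀ i : Fin r, A' i i = X ^ e i := by
      intro i
      rw [hA'e]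
      by_cases hi : al < i
      · rw [htri i al hi, zero_mul, add_zero, hdiag i]
      · rw [hh]; simp only [if_neg hi]; rw [mul_zero, add_zero, hdiag i]
    have hred' : ∀ i c : Fin r, i < c → ∀ m : ℕ, e c ≤ m →
        PowerSeries.coeff m (A' i c) = 0 := by
      intro i c hic m hm
      rw [hA'e, map_add, hred i c hic m hm, zero_add]
      by_cases hc : al < c
      swap
      · rw [hh]; simp only [if_neg hc]; rw [mul_zero, map_zero]
      rcases lt_trichotomy al i with hi | hi | hi
      · rw [htri i al hi, zero_mul, map_zero]
      · rw [← hi] at hic ⊢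
        rw [hdiag al, hh]
        simp only [if_pos hc]
        rw [mul_neg, hXphi c, map_neg, hphi, PowerSeries.coeff_mk]
        by_cases hd : e al ≤ m ∧ m % p = e al % p
        · rw [if_pos hd, hred al c hc m hm, neg_zero]
        · rw [if_neg hd, neg_zero]
      · rw [PowerSeries.coeff_mul]
        apply Finset.sum_eq_zero
        rintro ⟨u1, v1⟩ hmem
        rw [Finset.HasAntidiagonal.mem_antidiagonal] at hmem
        by_cases hu : e al ≤ u1
        · rw [hred i al hi u1 hu, zero_mul]
        · rw [hcoeffh c v1 hc]
          rcases Nat.decEq ((v1 + e al) % p) (e al % p) with hd | hd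
          · rw [if_neg hd, neg_zero, mul_zero]
          · rw [if_pos hd, hred al c hc (v1 + e al) (by omega), neg_zero, mul_zero]
    have hcln' : ∀ a c : Fin r, a < c → l ≤ (a : ℕ) → ∀ m : ℕ, e a ≤ m → m % p = e a % p →
        PowerSeries.coeff m (A' a c) = 0 := by
      intro a c hac hla m h1 h2
      rcases lt_trichotomy al a with hi | hi | hi
      · rw [hA'e, htri a al hi, zero_mul, add_zero]
        refine hcln a c hac ?_ m h1 h2
        rw [Fin.lt_def] at hi
        omega
      · rw [← hi] at hac h1 h2 ⊢
        rw [hA'e, hdiag al, hh]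
        simp only [if_pos hac]
        rw [mul_neg, hXphi c, map_add, map_neg, hphi, PowerSeries.coeff_mk,
          if_pos ⟨h1, h2⟩]
        exact add_neg_cancel _
      · exfalso
        rw [Fin.lt_def] at hi
        omega
    obtain ⟨N₂, hN₂, hN₂u, g1, g2, g3, g4⟩ := IH A' htri' hdiag' hred' hcln'
    have hunit : IsUnit (colOp al h) := isUnit_colOp al h hhal
    have hAN : A * (colOp al h * N₂) = A' * N₂ := by rw [hA'def, Matrix.mul_assoc]
    exact ⟨colOp al h * N₂, hunit.mul hN₂, (uMat_colOp p al h hUh).mul hN₂u,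
      fun i j hji => by rw [hAN]; exact g1 i j hji,
      fun i => by rw [hAN]; exact g2 i,
      fun i c hic m hm => by rw [hAN]; exact g3 i c hic m hm,
      fun a c hac m h1 h2 => by rw [hAN]; exact g4 a c hac m h1 h2⟩

set_option maxHeartbeats 2000000 in
lemma main_aux (k : Type*) [Field k] (p : ℕ) (r : ℕ)
    (S : Matrix (Fin r) (Fin r) (PowerSeries k)) (hS : S.det ≠ 0) :
    ∃ (M N : Matrix (Fin r) (Fin r) (PowerSeries k)) (e : Fin r → ℕ),
      IsUnit M ∧ IsUnit N ∧
      (∀ i j : Fin r, ∀ m : ℕ, ¬ p ∣ m → PowerSeries.coeff m (N i j) = 0) ∧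
      (∀ i j : Fin r, j < i → (M * S * N) i j = 0) ∧
      (∀ i : Fin r, (M * S * N) i i = X ^ (e i)) ∧
      (∀ i j : Fin r, i < j → ∀ m : ℕ, e j ≤ m →
        PowerSeries.coeff m ((M * S * N) i j) = 0) ∧
      (∀ i j : Fin r, i < j → ∀ m : ℕ, m % p = e i % p →
        PowerSeries.coeff m ((M * S * N) i j) = 0) := by
  classical
  set GoodSet : Set (Fin r → ℕ) := {e | ∃ M N : Matrix (Fin r) (Fin r) (PowerSeries k),
    IsUnit M ∧ IsUnit N ∧ UMat p N ∧
    (∀ i j : Fin r, j < i → (M * S * N) i j = 0) ∧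
    (∀ i : Fin r, (M * S * N) i i = X ^ e i) ∧
    (∀ i j : Fin r, i < j → ∀ m : ℕ, e j ≤ m →
      PowerSeries.coeff m ((M * S * N) i j) = 0)} with hGS
  have hne : GoodSet.Nonempty := by
    obtain ⟨M₀, e₀, hM₀, htri₀, hdiag₀, -, -⟩ :=
      triangularize k r r 0 (by omega) S hS (fun _ => 0)
        (by intro c hc; exact absurd hc (by omega))
    obtain ⟨M₁, hM₁, htri₁, hdiag₁, hred₁⟩ :=
      reduce k r e₀ r 0 (by omega) (M₀ * S) htri₀ hdiag₀
        (by intro i c hic hc; exact absurd hc (by omega))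
    have heq : (M₁ * M₀) * S * 1 = M₁ * (M₀ * S) := by
      rw [Matrix.mul_one, Matrix.mul_assoc]
    refine ⟨e₀, M₁ * M₀, 1, hM₁.mul hM₀, isUnit_one, uMat_one p, ?_, ?_, ?_⟩
    · intro i j hji; rw [heq]; exact htri₁ i j hji
    · intro i; rw [heq]; exact hdiag₁ i
    · intro i j hij m hm; rw [heq]; exact hred₁ i j hij m hm
  have wf : WellFounded (Pi.Lex (· < ·) (fun {_} => (· < ·)) :
      (Fin r → ℕ) → (Fin r → ℕ) → Prop) :=
    Pi.Lex.wellFounded (· < ·) fun _ => (wellFounded_lt : WellFounded ((· < ·) : ℕ → ℕ → Prop))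
  obtain ⟨emin, hmem, hmin2⟩ := wf.has_min GoodSet hne
  obtain ⟨M, N, hM, hN, hNu, htri, hdiag, hred⟩ := hmem
  obtain ⟨Nc, hNc, hNcu, ctri, cdiag, cred, ccln⟩ :=
    clear k p r emin r (M * S * N) htri hdiag hred
      (by intro a c hac hla m h1 h2; exfalso; have := a.isLt; omega)
  have hfull : ∀ i j : Fin r, i < j → ∀ m : ℕ, m % p = emin i % p →
      PowerSeries.coeff m ((M * S * N * Nc) i j) = 0 := by
    intro i j hij m hm
    by_cases hge : emin i ≤ m
    · exact ccln i j hij m hge hm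
    push_neg at hge
    by_contra hc0
    have hijv : (i : ℕ) < (j : ℕ) := hij
    set σ := Equiv.swap i j with hσ
    set B' := (M * S * N * Nc) * permR k σ with hB'
    have hB'e : ∀ a b, B' a b = (M * S * N * Nc) a (σ b) := fun a b => mul_permR σ _ a b
    have hB'det : B'.det ≠ 0 := by
      have hMd : M.det ≠ 0 := ((Matrix.isUnit_iff_isUnit_det M).mp hM).ne_zero
      have hNd : N.det ≠ 0 := ((Matrix.isUnit_iff_isUnit_det N).mp hN).ne_zero
      have hNcd : Nc.det ≠ 0 := ((Matrix.isUnit_iff_isUnit_det Nc).mp hNc).ne_zero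
      have hPd : (permR k σ).det ≠ 0 :=
        ((Matrix.isUnit_iff_isUnit_det (permR k σ)).mp (isUnit_permR σ)).ne_zero
      have hd : B'.det = M.det * S.det * N.det * Nc.det * (permR k σ).det := by
        rw [hB', Matrix.det_mul, Matrix.det_mul, Matrix.det_mul, Matrix.det_mul]
      rw [hd]
      exact mul_ne_zero (mul_ne_zero (mul_ne_zero (mul_ne_zero hMd hS) hNd) hNcd) hPd
    have hgood' : ∀ c : Fin r, (c : ℕ) < (i : ℕ) →
        (∀ kk : Fin r, c < kk → B' kk c = 0) ∧ B' c c = X ^ emin c := by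
      intro c hc
      have hfix : σ c = c := Equiv.swap_apply_of_ne_of_ne
        (by intro h; rw [h] at hc; omega)
        (by intro h; rw [h] at hc; omega)
      constructor
      · intro kk hkk; rw [hB'e, hfix]; exact ctri kk c hkk
      · rw [hB'e, hfix]; exact cdiag c
    obtain ⟨M₂, e', hM₂, htri₂, hdiag₂, hpre₂, hbound₂⟩ :=
      triangularize k r r (i : ℕ) (by omega) B' hB'det emin hgood'
    have hfineta : (⟨(i : ℕ), i.isLt⟩ : Fin r) = i := rfl
    have hbnd : e' i ≤ m := by
      have h1 := hbound₂ i.isLt i m (le_refl _)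
        (by rw [hfineta, hB'e, hσ, Equiv.swap_apply_left]; exact hc0)
      rwa [hfineta] at h1
    obtain ⟨M₃, hM₃, ttri, tdiag, tred⟩ :=
      reduce k r e' r 0 (by omega) (M₂ * B') htri₂ hdiag₂
        (by intro a c hac hcc; exact absurd hcc (by omega))
    have hGood' : e' ∈ GoodSet := by
      have heq : (M₃ * M₂ * M) * S * (N * (Nc * permR k σ)) = M₃ * (M₂ * B') := by
        rw [hB']
        simp only [Matrix.mul_assoc]
      exact ⟨M₃ * M₂ * M, N * (Nc * permR k σ), (hM₃.mul hM₂).mul hM,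
        hN.mul (hNc.mul (isUnit_permR σ)),
        UMat.mul hNu (UMat.mul hNcu (uMat_permR p σ)),
        fun i2 j2 hji2 => by rw [heq]; exact ttri i2 j2 hji2,
        fun i2 => by rw [heq]; exact tdiag i2,
        fun i2 j2 hij2 m2 hm2 => by rw [heq]; exact tred i2 j2 hij2 m2 hm2⟩
    have hlex : Pi.Lex (· < ·) (fun {_} => (· < ·)) e' emin := by
      refine ⟨i, ?_, ?_⟩
      · intro j2 hj2
        exact hpre₂ j2 hj2
      · have := hpre₂
        omega
    exact hmin2 e' hGood' hlex
  have heq2 : M * S * (N * Nc) = M * S * N * Nc := by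
    rw [Matrix.mul_assoc (M * S) N Nc]
  refine ⟨M, N * Nc, emin, hM, hN.mul hNc, ?_, ?_, ?_, ?_, ?_⟩
  · exact fun i j m hm => UMat.mul hNu hNcu i j m hm
  · intro i j hji; rw [heq2]; exact ctri i j hji
  · intro i; rw [heq2]; exact cdiag i
  · intro i j hij m hm; rw [heq2]; exact cred i j hij m hm
  · intro i j hij m hm; rw [heq2]; exact hfull i j hij m hm


end Stmt1Aux


open Stmt1Aux


/-- In characteristic `p`, an `r × r` matrix over `k⟦t⟧` with nonzero determinant can be
brought, by an invertible row operation matrix `M` over `k⟦t⟧` and an invertible column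
operation matrix `N` with entries in `k⟦t^p⟧` (no coefficients in degrees not divisible
by `p`), to upper triangular form with diagonal `t^{e_i}`, entries above the diagonal in
column `j` polynomials of degree `< e_j`, and the `(i,j)` entry (for `i < j`) having no
monomial whose exponent is congruent to `e_i` mod `p`. -/
theorem stmt1 (k : Type*) [Field k] (p : ℕ) [hp : Fact p.Prime] [CharP k p] (r : ℕ)
    (S : Matrix (Fin r) (Fin r) (PowerSeries k)) (hS : S.det ≠ 0) :
    ∃ (M N : Matrix (Fin r) (Fin r) (PowerSeries k)) (e : Fin r → ℕ),
      IsUnit M ∧ IsUnit N ∧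
      (∀ i j : Fin r, ∀ m : ℕ, ¬ p ∣ m → PowerSeries.coeff m (N i j) = 0) ∧
      (∀ i j : Fin r, j < i → (M * S * N) i j = 0) ∧
      (∀ i : Fin r, (M * S * N) i i = X ^ (e i)) ∧
      (∀ i j : Fin r, i < j → ∀ m : ℕ, e j ≤ m →
        PowerSeries.coeff m ((M * S * N) i j) = 0) ∧
      (∀ i j : Fin r, i < j → ∀ m : ℕ, m % p = e i % p →
        PowerSeries.coeff m ((M * S * N) i j) = 0) := by
  exact Stmt1Aux.main_aux k p r S hS
end

section
/- Let k be a field of characteristic p > 0, let e ∈ F_p be nonzero, and consider the rank-one connection ∇(s) = ds + e·s·t^{-1}dt on k[[t]]. If f ∈ k[[t]] satisfies df = 0 (i.e., f ∈ k[[t^p]]) and s ∈ k[[t]] is such that t·∇(s)/dt is divisible by f in k[[t]], then there exists s' ∈ k[[t]] with ∇(f·s') = f·∇(s') = ∇(s). -/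
open PowerSeries

/-- `nabla k e s` is `t·∇(s)/dt` for the rank-one connection `∇(s) = ds + e·s·t⁻¹dt`
on `k⟦t⟧`: for `s = Σ aᵢ tⁱ` it is `Σ (i+e) aᵢ tⁱ`. -/
noncomputable def nabla (k : Type*) [Field k] (e : ℕ) (s : PowerSeries k) : PowerSeries k :=
  PowerSeries.mk fun i => ((i : k) + (e : k)) * PowerSeries.coeff i s

/-- Divisibility lemma: in characteristic `p`, for the rank-one connection
`∇(s) = ds + e·s·t⁻¹dt` with `e ∈ 𝔽_p` nonzero, if `f ∈ k⟦t^p⟧` (i.e. `df = 0`) divides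
`t·∇(s)/dt`, then there is `s'` with `∇(f·s') = f·∇(s') = ∇(s)`. -/
theorem stmt4 (k : Type*) [Field k] (p : ℕ) [hp : Fact p.Prime] [CharP k p]
    (e : ℕ) (he0 : 0 < e) (he : e < p) (f s : PowerSeries k)
    (hf : ∀ m : ℕ, ¬ p ∣ m → PowerSeries.coeff m f = 0)
    (hdvd : f ∣ nabla k e s) :
    ∃ s' : PowerSeries k,
      nabla k e (f * s') = nabla k e s ∧ nabla k e (f * s') = f * nabla k e s' := by
  classical
  obtain ⟨g, hg⟩ := hdvd
  have hzero : nabla k e (0 : PowerSeries k) = 0 := by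
    ext n; simp [nabla]
  -- Leibniz: since df = 0, nabla (f * s') = f * nabla s'
  have keyA : ∀ s' : PowerSeries k, nabla k e (f * s') = f * nabla k e s' := by
    intro s'
    ext n
    simp only [nabla, coeff_mk, coeff_mul, Finset.mul_sum]
    apply Finset.sum_congr rfl
    intro x hx
    rw [Finset.HasAntidiagonal.mem_antidiagonal] at hx
    by_cases hi : p ∣ x.1
    · have hi0 : ((x.1 : ℕ) : k) = 0 := (CharP.cast_eq_zero_iff k p x.1).mpr hi
      have hn : ((n : ℕ) : k) = (x.2 : k) := by
        rw [← hx, Nat.cast_add, hi0, zero_add]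
      simp only [coeff_mk, hn]; ring
    · rw [hf x.1 hi]; ring
  by_cases hf0 : f = 0
  · refine ⟨0, ?_, ?_⟩ <;> simp [hf0, hzero, hg]
  -- coefficients of g vanish where (n:k)+(e:k)=0
  have hgz : ∀ n : ℕ, ((n : k) + (e : k) = 0) → PowerSeries.coeff n g = 0 := by
    set g' : PowerSeries k :=
      PowerSeries.mk fun n => if ((n : k) + (e : k) = 0) then PowerSeries.coeff n g else 0
      with hg'def
    have hmul : f * g' = 0 := by
      ext n
      rw [map_zero, coeff_mul]
      by_cases hn : ((n : k) + (e : k) = 0)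
      · have : ∀ x ∈ Finset.HasAntidiagonal.antidiagonal n,
            PowerSeries.coeff x.1 f * PowerSeries.coeff x.2 g' =
            PowerSeries.coeff x.1 f * PowerSeries.coeff x.2 g := by
          intro x hx
          rw [Finset.HasAntidiagonal.mem_antidiagonal] at hx
          by_cases hi : p ∣ x.1
          · have hi0 : ((x.1 : ℕ) : k) = 0 := (CharP.cast_eq_zero_iff k p x.1).mpr hi
            have hj : ((x.2 : k) + (e : k) = 0) := by
              rw [← hx, Nat.cast_add, hi0, zero_add] at hn; exact hn
            simp [hg'def, hj]
          · rw [hf x.1 hi, zero_mul, zero_mul]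
        rw [Finset.sum_congr rfl this, ← coeff_mul, ← hg]
        simp [nabla, hn]
      · apply Finset.sum_eq_zero
        intro x hx
        rw [Finset.HasAntidiagonal.mem_antidiagonal] at hx
        by_cases hi : p ∣ x.1
        · have hi0 : ((x.1 : ℕ) : k) = 0 := (CharP.cast_eq_zero_iff k p x.1).mpr hi
          have hj : ¬ ((x.2 : k) + (e : k) = 0) := by
            rw [← hx, Nat.cast_add, hi0, zero_add] at hn; exact hn
          simp [hg'def, hj]
        · rw [hf x.1 hi, zero_mul]
    have hg'0 : g' = 0 := by
      have := mul_left_cancel₀ hf0 (hmul.trans (mul_zero f).symm)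
      exact this
    intro n hn
    have : PowerSeries.coeff n g' = 0 := by rw [hg'0, map_zero]
    rwa [hg'def, coeff_mk, if_pos hn] at this
  -- build s' with nabla s' = g
  set s' : PowerSeries k :=
    PowerSeries.mk fun n =>
      if ((n : k) + (e : k) = 0) then 0 else PowerSeries.coeff n g / ((n : k) + (e : k))
    with hs'def
  have hns' : nabla k e s' = g := by
    ext n
    simp only [nabla, coeff_mk, hs'def]
    by_cases hn : ((n : k) + (e : k) = 0)
    · rw [if_pos hn, hn, zero_mul, hgz n hn]
    · rw [if_neg hn, mul_div_cancel₀ _ hn]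
  exact ⟨s', by rw [keyA, hns', hg], by rw [keyA, hns']⟩
end

section
/- Let k be a field of characteristic p > 0 and S a 2×2 matrix over k[[t]] with entries g_{ij}, with ord_t(det S) = p. Suppose there exists c ∈ k such that, setting S' = S·U(-c) with U(-c) the upper triangular unipotent matrix with -c in position (1,2), the entries g'_{ij} of S' satisfy min{ord_t g'_{11}, ord_t g'_{21}} + min{ord_t g'_{12}, ord_t g'_{22}} ≥ p. Then there exists an invertible matrix M over k[[t]] such that M·S' is diagonal with diagonal entries t^e and t^{p-e} for some 0 ≤ e ≤ p. -/
open PowerSeries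

/-- If a `2×2` matrix `S` over `k⟦t⟧` (char `p > 0`) has `ord_t(det S) = p` and for some
constant `c` the matrix `S' = S·U(-c)` satisfies
`min{ord g'₁₁, ord g'₂₁} + min{ord g'₁₂, ord g'₂₂} ≥ p`, then `S'` can be diagonalized by
an invertible matrix on the left, with diagonal entries `t^e`, `t^{p-e}`. -/
theorem stmt8 (k : Type*) [Field k] (p : ℕ) [hp : Fact p.Prime] [CharP k p]
    (S : Matrix (Fin 2) (Fin 2) (PowerSeries k))
    (hdet : (X : PowerSeries k) ^ p ∣ S.det ∧ ¬ (X : PowerSeries k) ^ (p + 1) ∣ S.det)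
    (c : k)
    (hmin : ∃ a b : ℕ, p ≤ a + b ∧
      (X : PowerSeries k) ^ a ∣ (S * !![1, -(PowerSeries.C c); 0, 1]) 0 0 ∧
      (X : PowerSeries k) ^ a ∣ (S * !![1, -(PowerSeries.C c); 0, 1]) 1 0 ∧
      (X : PowerSeries k) ^ b ∣ (S * !![1, -(PowerSeries.C c); 0, 1]) 0 1 ∧
      (X : PowerSeries k) ^ b ∣ (S * !![1, -(PowerSeries.C c); 0, 1]) 1 1) :
    ∃ (M : Matrix (Fin 2) (Fin 2) (PowerSeries k)) (e : ℕ), IsUnit M ∧ e ≤ p ∧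
      M * (S * !![1, -(PowerSeries.C c); 0, 1]) = !![X ^ e, 0; 0, X ^ (p - e)] := by
  obtain ⟨a, b, hab, h1, h2, h3, h4⟩ := hmin
  set S' : Matrix (Fin 2) (Fin 2) (PowerSeries k) :=
    S * !![1, -(PowerSeries.C c); 0, 1] with hS'
  have hdetS' : S'.det = S.det := by
    rw [hS', Matrix.det_mul, Matrix.det_fin_two_of]
    ring_nf
  have hXp : (X : PowerSeries k) ^ p ∣ S'.det := hdetS' ▸ hdet.1
  have hnot : ¬ (X : PowerSeries k) ^ (p + 1) ∣ S'.det := hdetS' ▸ hdet.2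
  -- a + b = p
  have hdvdab : (X : PowerSeries k) ^ (a + b) ∣ S'.det := by
    rw [Matrix.det_fin_two, pow_add]
    exact dvd_sub (mul_dvd_mul h1 h4) (mul_comm ((X : PowerSeries k) ^ a) (X ^ b) ▸
      mul_dvd_mul h3 h2)
  have habp : a + b = p := by
    by_contra h
    have : p + 1 ≤ a + b := lt_of_le_of_ne hab (Ne.symm h)
    exact hnot ((pow_dvd_pow _ this).trans hdvdab)
  obtain ⟨f0, hf0⟩ := h1
  obtain ⟨f1, hf1⟩ := h2
  obtain ⟨g0, hg0⟩ := h3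
  obtain ⟨g1, hg1⟩ := h4
  set N : Matrix (Fin 2) (Fin 2) (PowerSeries k) := !![f0, g0; f1, g1] with hN
  set D : Matrix (Fin 2) (Fin 2) (PowerSeries k) := !![X ^ a, 0; 0, X ^ b] with hD
  have hND : N * D = S' := by
    ext i j
    fin_cases i <;> fin_cases j <;>
      simp [hN, hD, Matrix.mul_apply, Fin.sum_univ_two, hf0, hf1, hg0, hg1, mul_comm]
  -- determinant of N is a unit
  have hdetD : D.det = (X : PowerSeries k) ^ p := by
    rw [hD, Matrix.det_fin_two_of, ← habp, pow_add]; ring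
  have hXpne : (X : PowerSeries k) ^ p ≠ 0 := pow_ne_zero _ X_ne_zero
  obtain ⟨u, hu⟩ := hXp
  have hu' : N.det = u := by
    have : (X : PowerSeries k) ^ p * N.det = X ^ p * u := by
      rw [← hu, ← hND, Matrix.det_mul, hdetD]; ring
    exact mul_left_cancel₀ hXpne this
  have hunit : IsUnit N.det := by
    rw [hu', isUnit_iff_constantCoeff, isUnit_iff_ne_zero]
    intro hc0
    apply hnot
    rw [hu, pow_succ]
    exact mul_dvd_mul_left _ (X_dvd_iff.mpr (by simpa using hc0))
  have hNU : IsUnit N := (Matrix.isUnit_iff_isUnit_det N).mpr hunit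
  refine ⟨↑hNU.unit⁻¹, a, Units.isUnit _, ?_, ?_⟩
  · omega
  · have : (↑hNU.unit⁻¹ : Matrix (Fin 2) (Fin 2) (PowerSeries k)) * N = 1 := by
      simpa [hNU.unit_spec] using hNU.val_inv_mul
    have hba : b = p - a := by omega
    calc (↑hNU.unit⁻¹ : Matrix (Fin 2) (Fin 2) (PowerSeries k)) * S'
        = ↑hNU.unit⁻¹ * (N * D) := by rw [hND]
      _ = (↑hNU.unit⁻¹ * N) * D := by rw [mul_assoc]
      _ = D := by rw [this, one_mul]
      _ = !![X ^ a, 0; 0, X ^ (p - a)] := by rw [hD, hba]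
end

section
/- Let k be a field of characteristic p > 0 and let S be a 2×2 matrix over k[[t]] of the form diag(t^{e_1}, t^{e_2}) + ε·(f_{ij}) over k[[t]][ε]/(ε²), with 0 < e_1, e_2 < p. Then the matrix T = S·d(S^{-1}) equals, modulo ε², the matrix with (i,j)-entry δ_{ij}·(-e_i t^{-1}) + ε·t^{-e_j - 1}·(e_i f_{ij} - t f_{ij}'), times dt. Consequently, T has at most simple poles at t = 0 if and only if ord_t(e_i f_{ij} - t f_{ij}') ≥ e_j for all i, j. -/
open PowerSeries

/-- The matrix `S = diag(t^{e₁}, t^{e₂}) + ε(f_ij)` over `k⟦t⟧[ε]/(ε²)`,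
realized over `(k[ε]/(ε²))⟦t⟧`. -/
noncomputable def Smat (k : Type*) [Field k] (e : Fin 2 → ℕ)
    (f : Fin 2 → Fin 2 → PowerSeries k) :
    Matrix (Fin 2) (Fin 2) (PowerSeries (DualNumber k)) :=
  Matrix.of fun i j =>
    (if i = j then (X : PowerSeries (DualNumber k)) ^ e i else 0) +
      PowerSeries.C (R := DualNumber k) DualNumber.eps *
        PowerSeries.map (algebraMap k (DualNumber k)) (f i j)

/-- `gser k e f i j = e_i f_ij - t f_ij'`. -/
noncomputable def gser (k : Type*) [Field k] (e : Fin 2 → ℕ)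
    (f : Fin 2 → Fin 2 → PowerSeries k) (i j : Fin 2) : PowerSeries k :=
  PowerSeries.C (R := k) (e i : k) * f i j - X * (PowerSeries.derivative k (f i j))

/-- `Tmat = X^p · T` where `T` is the matrix with `(i,j)` entry
`δ_ij(-e_i t⁻¹) + ε t^{-e_j-1}(e_i f_ij - t f_ij')`; since `e_j < p`, `X^p·T` has
power series entries. -/
noncomputable def Tmat (k : Type*) [Field k] (p : ℕ) (e : Fin 2 → ℕ)
    (f : Fin 2 → Fin 2 → PowerSeries k) :
    Matrix (Fin 2) (Fin 2) (PowerSeries (DualNumber k)) :=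
  Matrix.of fun i j =>
    (if i = j then
        -(PowerSeries.C (R := DualNumber k) (algebraMap k (DualNumber k) (e i : k))) *
          (X : PowerSeries (DualNumber k)) ^ (p - 1)
      else 0) +
      PowerSeries.C (R := DualNumber k) DualNumber.eps *
        (X : PowerSeries (DualNumber k)) ^ (p - e j - 1) *
        PowerSeries.map (algebraMap k (DualNumber k)) (gser k e f i j)

lemma aux_derivative_map {k : Type*} [CommRing k] {K : Type*} [CommRing K] (σ : k →+* K)
    (f : PowerSeries k) :
    PowerSeries.derivative K (PowerSeries.map σ f) =
      PowerSeries.map σ (PowerSeries.derivative k f) := by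
  ext n
  simp [coeff_derivative, coeff_map]

lemma aux_derivative_X_pow (R : Type*) [CommRing R] (n : ℕ) :
    PowerSeries.derivative R ((X : PowerSeries R) ^ n) = (n : PowerSeries R) * X ^ (n-1) := by
  rw [Derivation.leibniz_pow, derivative_X, smul_eq_mul, mul_one, nsmul_eq_mul]

lemma aux_eps_mul {k : Type*} [Field k] (a : k) :
    (DualNumber.eps * algebraMap k (DualNumber k) a = 0) ↔ a = 0 := by
  constructor
  · intro h
    have := congrArg TrivSqZeroExt.snd h
    simpa [TrivSqZeroExt.snd_mul, TrivSqZeroExt.algebraMap_eq_inl] using this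
  · rintro rfl; simp

lemma aux_X_shift {R : Type*} [CommRing R] (c n : ℕ) (h : PowerSeries R) :
    (X : PowerSeries R)^(c+n) ∣ (X : PowerSeries R)^c * h ↔ (X : PowerSeries R)^n ∣ h := by
  rw [X_pow_dvd_iff, X_pow_dvd_iff]
  constructor
  · intro H m hm
    have := H (m + c) (by omega)
    rwa [coeff_X_pow_mul] at this
  · intro H m hm
    rw [coeff_X_pow_mul']
    split_ifs with hc
    · exact H (m - c) (by omega)
    · rfl

lemma aux_eps_dvd {k : Type*} [Field k] (n : ℕ) (g : PowerSeries k) :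
    (X : PowerSeries (DualNumber k))^n ∣
      (PowerSeries.C (R := DualNumber k) DualNumber.eps *
        PowerSeries.map (algebraMap k (DualNumber k)) g) ↔ (X : PowerSeries k)^n ∣ g := by
  rw [X_pow_dvd_iff, X_pow_dvd_iff]
  refine forall_congr' fun m => imp_congr_right fun _ => ?_
  rw [coeff_C_mul, coeff_map, aux_eps_mul]

set_option maxHeartbeats 1000000 in
lemma part1 (k : Type*) [Field k] (p : ℕ)
    (e : Fin 2 → ℕ) (he : ∀ i, 0 < e i ∧ e i < p)
    (f : Fin 2 → Fin 2 → PowerSeries k) :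
    Tmat k p e f * Smat k e f =
      -(((X : PowerSeries (DualNumber k)) ^ p) •
        (Smat k e f).map (PowerSeries.derivative (DualNumber k))) := by
  have heps : PowerSeries.C (R := DualNumber k) DualNumber.eps *
      PowerSeries.C (R := DualNumber k) DualNumber.eps = 0 := by
    rw [← map_mul, DualNumber.eps_mul_eps, map_zero]
  have heps2 : PowerSeries.C (R := DualNumber k) DualNumber.eps ^ 2 = 0 := by rw [sq]; exact heps
  obtain ⟨b0, hb0⟩ : ∃ b, e 0 = b + 1 := ⟨e 0 - 1, by have := (he 0).1; omega⟩
  obtain ⟨b1, hb1⟩ : ∃ b, e 1 = b + 1 := ⟨e 1 - 1, by have := (he 1).1; omega⟩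
  obtain ⟨c0, hc0⟩ : ∃ c, p - e 0 - 1 = c := ⟨_, rfl⟩
  obtain ⟨c1, hc1⟩ : ∃ c, p - e 1 - 1 = c := ⟨_, rfl⟩
  obtain ⟨q, hq, hq0, hq1⟩ : ∃ q, p - 1 = q ∧ q = c0 + b0 + 1 ∧ q = c1 + b1 + 1 :=
    ⟨p - 1, rfl, by have := (he 0).2; omega, by have := (he 1).2; omega⟩
  have hXp : (X : PowerSeries (DualNumber k))^p = X^(p-1) * X := by
    rw [← pow_succ]; congr 1; have := (he 0).1; have := (he 0).2; omega
  apply Matrix.ext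
  intro i l
  fin_cases i <;> fin_cases l
  case _ => -- (0,0)
    simp only [Matrix.mul_apply, Fin.sum_univ_two, Tmat, Smat, gser, Matrix.of_apply,
      Matrix.neg_apply, Matrix.smul_apply, Matrix.map_apply, smul_eq_mul, Fin.isValue,
      map_sub, map_mul, PowerSeries.map_C, map_X, map_add, Derivation.leibniz, map_zero,
      derivative_C, aux_derivative_X_pow, aux_derivative_map, map_natCast,
      reduceIte, Fin.zero_eta, Fin.mk_one, one_ne_zero, zero_ne_one, if_true, if_false]
    rw [hXp, hq, hc0, hc1, hb0, hq0]
    try simp only [Nat.add_sub_cancel]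
    push_cast
    ring_nf
    try simp only [heps2, zero_mul, mul_zero, neg_zero, add_zero, zero_add, sub_zero, zero_sub]
    try ring
  case _ => -- (0,1)
    simp only [Matrix.mul_apply, Fin.sum_univ_two, Tmat, Smat, gser, Matrix.of_apply,
      Matrix.neg_apply, Matrix.smul_apply, Matrix.map_apply, smul_eq_mul, Fin.isValue,
      map_sub, map_mul, PowerSeries.map_C, map_X, map_add, Derivation.leibniz, map_zero,
      derivative_C, aux_derivative_X_pow, aux_derivative_map, map_natCast,
      reduceIte, Fin.zero_eta, Fin.mk_one, one_ne_zero, zero_ne_one, if_true, if_false]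
    rw [hXp, hq, hc0, hc1, hb1, hq1]
    try simp only [Nat.add_sub_cancel]
    push_cast
    ring_nf
    try simp only [heps2, zero_mul, mul_zero, neg_zero, add_zero, zero_add, sub_zero, zero_sub]
    try ring
  case _ => -- (1,0)
    simp only [Matrix.mul_apply, Fin.sum_univ_two, Tmat, Smat, gser, Matrix.of_apply,
      Matrix.neg_apply, Matrix.smul_apply, Matrix.map_apply, smul_eq_mul, Fin.isValue,
      map_sub, map_mul, PowerSeries.map_C, map_X, map_add, Derivation.leibniz, map_zero,
      derivative_C, aux_derivative_X_pow, aux_derivative_map, map_natCast,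
      reduceIte, Fin.zero_eta, Fin.mk_one, one_ne_zero, zero_ne_one, if_true, if_false]
    rw [hXp, hq, hc0, hc1, hb0, hq0]
    try simp only [Nat.add_sub_cancel]
    push_cast
    ring_nf
    try simp only [heps2, zero_mul, mul_zero, neg_zero, add_zero, zero_add, sub_zero, zero_sub]
    try ring
  case _ => -- (1,1)
    simp only [Matrix.mul_apply, Fin.sum_univ_two, Tmat, Smat, gser, Matrix.of_apply,
      Matrix.neg_apply, Matrix.smul_apply, Matrix.map_apply, smul_eq_mul, Fin.isValue,
      map_sub, map_mul, PowerSeries.map_C, map_X, map_add, Derivation.leibniz, map_zero,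
      derivative_C, aux_derivative_X_pow, aux_derivative_map, map_natCast,
      reduceIte, Fin.zero_eta, Fin.mk_one, one_ne_zero, zero_ne_one, if_true, if_false]
    rw [hXp, hq, hc0, hc1, hb1, hq1]
    try simp only [Nat.add_sub_cancel]
    push_cast
    ring_nf
    try simp only [heps2, zero_mul, mul_zero, neg_zero, add_zero, zero_add, sub_zero, zero_sub]
    try ring

lemma part2 (k : Type*) [Field k] (p : ℕ)
    (e : Fin 2 → ℕ) (he : ∀ i, 0 < e i ∧ e i < p)
    (f : Fin 2 → Fin 2 → PowerSeries k) (i j : Fin 2) :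
    ((X : PowerSeries (DualNumber k)) ^ (p - 1) ∣ Tmat k p e f i j) ↔
      ((X : PowerSeries k) ^ (e j) ∣ gser k e f i j) := by
  have hd : (X : PowerSeries (DualNumber k)) ^ (p - 1) ∣
      (if i = j then
        -(PowerSeries.C (R := DualNumber k) (algebraMap k (DualNumber k) (e i : k))) *
          (X : PowerSeries (DualNumber k)) ^ (p - 1)
      else 0) := by
    split_ifs
    · exact Dvd.intro _ (mul_comm _ _)
    · exact dvd_zero _
  have hrw : PowerSeries.C (R := DualNumber k) DualNumber.eps *
        (X : PowerSeries (DualNumber k)) ^ (p - e j - 1) *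
        PowerSeries.map (algebraMap k (DualNumber k)) (gser k e f i j) =
      (X : PowerSeries (DualNumber k)) ^ (p - e j - 1) *
        (PowerSeries.C (R := DualNumber k) DualNumber.eps *
          PowerSeries.map (algebraMap k (DualNumber k)) (gser k e f i j)) := by ring
  have hp1 : p - 1 = (p - e j - 1) + e j := by have := (he j).1; have := (he j).2; omega
  rw [show Tmat k p e f i j = _ + _ from rfl, dvd_add_right hd, hrw, hp1, aux_X_shift,
    aux_eps_dvd]

/-- For `S = diag(t^{e₁},t^{e₂}) + ε(f_ij)` with `0 < e_i < p`, the matrix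
`T = S·d(S⁻¹)` is, mod `ε²`, the matrix with entries
`δ_ij(-e_i t⁻¹) + ε t^{-e_j-1}(e_i f_ij - t f_ij')` (times `dt`): equivalently, its
numerator `X^p·T` satisfies `(X^p·T)·S = -X^p·dS`.  Consequently `T` has at most simple
poles at `t = 0` iff `ord_t(e_i f_ij - t f_ij') ≥ e_j` for all `i, j`. -/
theorem stmt16 (k : Type*) [Field k] (p : ℕ) [hp : Fact p.Prime] [CharP k p]
    (e : Fin 2 → ℕ) (he : ∀ i, 0 < e i ∧ e i < p)
    (f : Fin 2 → Fin 2 → PowerSeries k) :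
    Tmat k p e f * Smat k e f =
      -(((X : PowerSeries (DualNumber k)) ^ p) •
        (Smat k e f).map (PowerSeries.derivative (DualNumber k))) ∧
    ((∀ i j : Fin 2, (X : PowerSeries (DualNumber k)) ^ (p - 1) ∣ Tmat k p e f i j) ↔
      (∀ i j : Fin 2, (X : PowerSeries k) ^ (e j) ∣ gser k e f i j)) :=
  ⟨part1 k p e he f, forall_congr' fun i => forall_congr' fun j => part2 k p e he f i j⟩
end
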